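/- For all integers n, m ≥ 1, the number of digitally convex sets of the Cartesian product of the complete graphs K_n and K_m equals 2 + (2^n − 2)(2^m − 2), i.e., n_D(K_n □ K_m) = 2 + (2^n − 2)(2^m − 2). -/

import Mathlib

open SimpleGraph

/-- `N[S]`: the union of closed neighbourhoods of the vertices of `S`. -/
def closedNbhd {V : Type*} (G : SimpleGraph V) (S : Set V) : Set V :=
  ⋃ v ∈ S, insert v (G.neighborSet v)

/-- A set `S` is digitally convex in `G` if every vertex `v` with `N[v] ⊆ N[S]`
belongs to `S`. -/
def DigConvex {V : Type*} (G : SimpleGraph V) (S : Set V) : Prop :=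
  ∀ v : V, insert v (G.neighborSet v) ⊆ closedNbhd G S → v ∈ S

/-- `n_D(G)`: the number of digitally convex sets of `G`. -/
noncomputable def nD {V : Type*} (G : SimpleGraph V) : ℕ :=
  Nat.card {S : Set V // DigConvex G S}

section aux

variable {n m : ℕ}

local notation "G" => SimpleGraph.boxProd (⊤ : SimpleGraph (Fin n)) (⊤ : SimpleGraph (Fin m))

lemma cross_eq (v : Fin n × Fin m) :
    insert v ((G).neighborSet v) = {w : Fin n × Fin m | w.1 = v.1 ∨ w.2 = v.2} := by
  ext w
  simp only [Set.mem_insert_iff, mem_neighborSet, boxProd_adj, top_adj, Set.mem_setOf_eq,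
    Prod.ext_iff]
  constructor
  · rintro (⟨h1, h2⟩ | ⟨⟨h, h'⟩ | ⟨h, h'⟩⟩) <;> simp_all
  · rintro (h | h)
    · by_cases h2 : w.2 = v.2
      · exact Or.inl ⟨h, h2⟩
      · exact Or.inr (Or.inr ⟨fun hh => h2 hh.symm, h.symm⟩)
    · by_cases h1 : w.1 = v.1
      · exact Or.inl ⟨h1, h⟩
      · exact Or.inr (Or.inl ⟨fun hh => h1 hh.symm, h.symm⟩)

lemma closedNbhd_eq (S : Set (Fin n × Fin m)) :
    closedNbhd G S = {w : Fin n × Fin m | w.1 ∈ Prod.fst '' S ∨ w.2 ∈ Prod.snd '' S} := by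
  ext w
  simp only [closedNbhd, Set.mem_iUnion, cross_eq, Set.mem_setOf_eq, Set.mem_image]
  constructor
  · rintro ⟨v, hv, h | h⟩
    · exact Or.inl ⟨v, hv, h.symm⟩
    · exact Or.inr ⟨v, hv, h.symm⟩
  · rintro (⟨v, hv, h⟩ | ⟨v, hv, h⟩)
    · exact ⟨v, hv, Or.inl h.symm⟩
    · exact ⟨v, hv, Or.inr h.symm⟩

lemma digConvex_iff (S : Set (Fin n × Fin m)) :
    DigConvex G S ↔ S = ∅ ∨ S = Set.univ ∨
      ∃ A : Set (Fin n), ∃ B : Set (Fin m), A.Nonempty ∧ A ≠ Set.univ ∧ B.Nonempty ∧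
        B ≠ Set.univ ∧ S = A ×ˢ B := by
  constructor
  · intro hS
    by_cases hSe : S = ∅
    · exact Or.inl hSe
    have hSne : S.Nonempty := Set.nonempty_iff_ne_empty.mpr hSe
    set A := Prod.fst '' S with hA
    set B := Prod.snd '' S with hB
    by_cases hAu : A = Set.univ
    · refine Or.inr (Or.inl ?_)
      ext v
      simp only [Set.mem_univ, iff_true]
      apply hS
      intro w _
      rw [closedNbhd_eq]
      exact Or.inl (Set.eq_univ_iff_forall.mp hAu w.1)
    by_cases hBu : B = Set.univ
    · refine Or.inr (Or.inl ?_)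
      ext v
      simp only [Set.mem_univ, iff_true]
      apply hS
      intro w _
      rw [closedNbhd_eq]
      exact Or.inr (Set.eq_univ_iff_forall.mp hBu w.2)
    refine Or.inr (Or.inr ⟨A, B, hSne.image _, hAu, hSne.image _, hBu, ?_⟩)
    apply Set.Subset.antisymm
    · intro v hv
      exact ⟨⟨v, hv, rfl⟩, ⟨v, hv, rfl⟩⟩
    · rintro ⟨x, y⟩ ⟨hx, hy⟩
      apply hS
      rw [cross_eq, closedNbhd_eq]
      rintro w (h | h)
      · exact Or.inl (h ▸ hx)
      · exact Or.inr (h ▸ hy)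
  · rintro (rfl | rfl | ⟨A, B, hAne, hAu, hBne, hBu, rfl⟩)
    · intro v hv
      have : v ∈ closedNbhd G (∅ : Set (Fin n × Fin m)) := hv (Set.mem_insert _ _)
      simp [closedNbhd] at this
    · intro v _; trivial
    · intro v hv
      rw [cross_eq, closedNbhd_eq, Set.fst_image_prod _ hBne, Set.snd_image_prod hAne] at hv
      obtain ⟨y, hy⟩ := Set.nonempty_compl.mpr hBu
      obtain ⟨x, hx⟩ := Set.nonempty_compl.mpr hAu
      have h1 := hv (show ((v.1, y) : Fin n × Fin m) ∈ _ from Or.inl rfl)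
      have h2 := hv (show ((x, v.2) : Fin n × Fin m) ∈ _ from Or.inr rfl)
      simp only [Set.mem_setOf_eq] at h1 h2
      exact ⟨h1.resolve_right hy, h2.resolve_left hx⟩

end aux

/-- For `n, m ≥ 1`, `n_D(K_n □ K_m) = 2 + (2^n - 2)(2^m - 2)`. -/
theorem nD_complete_boxProd (n m : ℕ) (hn : 1 ≤ n) (hm : 1 ≤ m) :
    nD ((⊤ : SimpleGraph (Fin n)) □ (⊤ : SimpleGraph (Fin m))) =
      2 + (2 ^ n - 2) * (2 ^ m - 2) := by
  haveI : Nonempty (Fin n) := Fin.pos_iff_nonempty.mp hn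
  haveI : Nonempty (Fin m) := Fin.pos_iff_nonempty.mp hm
  set S₁ : Set (Set (Fin n)) := {A | A.Nonempty ∧ A ≠ Set.univ} with hS₁
  set S₂ : Set (Set (Fin m)) := {B | B.Nonempty ∧ B ≠ Set.univ} with hS₂
  set f : Set (Fin n) × Set (Fin m) → Set (Fin n × Fin m) := fun p => p.1 ×ˢ p.2 with hf
  have hconv : {S : Set (Fin n × Fin m) |
      DigConvex ((⊤ : SimpleGraph (Fin n)) □ (⊤ : SimpleGraph (Fin m))) S} =
      insert ∅ (insert Set.univ (f '' (S₁ ×ˢ S₂))) := by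
    ext S
    rw [Set.mem_setOf_eq, digConvex_iff]
    simp only [Set.mem_insert_iff, Set.mem_image, Set.mem_prod, hS₁, hS₂, hf,
      Set.mem_setOf_eq, Prod.exists]
    constructor
    · rintro (h | h | ⟨A, B, h1, h2, h3, h4, h5⟩)
      · exact Or.inl h
      · exact Or.inr (Or.inl h)
      · exact Or.inr (Or.inr ⟨A, B, ⟨⟨h1, h2⟩, ⟨h3, h4⟩⟩, h5.symm⟩)
    · rintro (h | h | ⟨A, B, ⟨⟨h1, h2⟩, ⟨h3, h4⟩⟩, h5⟩)
      · exact Or.inl h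
      · exact Or.inr (Or.inl h)
      · exact Or.inr (Or.inr ⟨A, B, h1, h2, h3, h4, h5.symm⟩)
  have hne_prod : ∀ p ∈ S₁ ×ˢ S₂, (f p).Nonempty := by
    rintro ⟨A, B⟩ ⟨⟨h1, _⟩, ⟨h3, _⟩⟩
    exact h1.prod h3
  have huniv_not : (Set.univ : Set (Fin n × Fin m)) ∉ f '' (S₁ ×ˢ S₂) := by
    rintro ⟨⟨A, B⟩, ⟨⟨h1, h2⟩, ⟨h3, h4⟩⟩, heq⟩
    apply h2
    have := congrArg (Set.image Prod.fst) heq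
    rwa [Set.fst_image_prod _ h3, Set.image_univ,
      Set.range_eq_univ.mpr Prod.fst_surjective] at this
  have hempty_not : (∅ : Set (Fin n × Fin m)) ∉ insert Set.univ (f '' (S₁ ×ˢ S₂)) := by
    rintro (h | ⟨p, hp, heq⟩)
    · exact Set.empty_ne_univ h
    · exact Set.nonempty_iff_ne_empty.mp (hne_prod p hp) heq
  have hinj : Set.InjOn f (S₁ ×ˢ S₂) := by
    rintro ⟨A, B⟩ ⟨⟨h1, _⟩, ⟨h3, _⟩⟩ ⟨A', B'⟩ ⟨⟨h1', _⟩, ⟨h3', _⟩⟩ heq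
    have hA : A = A' := by
      have := congrArg (Set.image Prod.fst) heq
      rwa [Set.fst_image_prod _ h3, Set.fst_image_prod _ h3'] at this
    have hB : B = B' := by
      have := congrArg (Set.image Prod.snd) heq
      rwa [Set.snd_image_prod h1, Set.snd_image_prod h1'] at this
    simp [hA, hB]
  have hcard1 : S₁.ncard = 2 ^ n - 2 := by
    have h1 : S₁ = (Set.univ : Set (Set (Fin n))) \ {∅, Set.univ} := by
      ext A
      simp [hS₁, Set.nonempty_iff_ne_empty, and_comm]
    rw [h1, Set.ncard_diff (Set.subset_univ _), Set.ncard_univ,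
      Set.ncard_pair (Set.empty_ne_univ), Nat.card_eq_fintype_card, Fintype.card_set,
      Fintype.card_fin]
  have hcard2 : S₂.ncard = 2 ^ m - 2 := by
    have h1 : S₂ = (Set.univ : Set (Set (Fin m))) \ {∅, Set.univ} := by
      ext B
      simp [hS₂, Set.nonempty_iff_ne_empty, and_comm]
    rw [h1, Set.ncard_diff (Set.subset_univ _), Set.ncard_univ,
      Set.ncard_pair (Set.empty_ne_univ), Nat.card_eq_fintype_card, Fintype.card_set,
      Fintype.card_fin]
  have hprodcard : (S₁ ×ˢ S₂).ncard = S₁.ncard * S₂.ncard := by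
    rw [← Nat.card_coe_set_eq, ← Nat.card_coe_set_eq, ← Nat.card_coe_set_eq,
      Nat.card_congr (Equiv.Set.prod S₁ S₂), Nat.card_prod]
  have : nD ((⊤ : SimpleGraph (Fin n)) □ (⊤ : SimpleGraph (Fin m))) =
      {S : Set (Fin n × Fin m) |
        DigConvex ((⊤ : SimpleGraph (Fin n)) □ (⊤ : SimpleGraph (Fin m))) S}.ncard := by
    rw [nD, ← Nat.card_coe_set_eq]
    rfl
  rw [this, hconv, Set.ncard_insert_of_notMem hempty_not,
    Set.ncard_insert_of_notMem huniv_not, Set.ncard_image_of_injOn hinj, hprodcard,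
    hcard1, hcard2]
  omega
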